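/- For every n ∈ ℕ, the subgroup φ(⟨X ∪ Y ∪ {y} ∪ {t_0, …, t_{n−1}}⟩) is a free factor of F_b. -/
import Mathlib


/-- The generating alphabet `X ⊔ Y ⊔ {y} ⊔ {indexed family over ℕ}`.  In the domain
`F_a` the `ℕ`-indexed generators are the `t_n`; in the codomain `F_b` they are the
`z_n`. -/
abbrev ConstrGen (X Y : Type) : Type := X ⊕ Y ⊕ Unit ⊕ ℕ

/-- The distinguished generator `y`. -/
def yGen (X Y : Type) : ConstrGen X Y := Sum.inr (Sum.inr (Sum.inl ()))

/-- The `n`-th `ℕ`-indexed generator (`t_n` in `F_a`, `z_n` in `F_b`). -/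
def nGen (X Y : Type) (n : ℕ) : ConstrGen X Y := Sum.inr (Sum.inr (Sum.inr n))

/-- The homomorphism `φ : F_a → F_b` which fixes each generator in `X ⊔ Y ⊔ {y}`
and sends `t_n ↦ y·z_{n+1}⁻¹·z_n·z_{n+1}`. -/
def constrPhi (X Y : Type) : FreeGroup (ConstrGen X Y) →* FreeGroup (ConstrGen X Y) :=
  FreeGroup.lift fun g => match g with
    | Sum.inl x => FreeGroup.of (Sum.inl x)
    | Sum.inr (Sum.inl w) => FreeGroup.of (Sum.inr (Sum.inl w))
    | Sum.inr (Sum.inr (Sum.inl _)) => FreeGroup.of (yGen X Y)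
    | Sum.inr (Sum.inr (Sum.inr n)) =>
        FreeGroup.of (yGen X Y) * (FreeGroup.of (nGen X Y (n + 1)))⁻¹ *
          FreeGroup.of (nGen X Y n) * FreeGroup.of (nGen X Y (n + 1))


/-- A subgroup `H` of a group `G` is a *free factor* of `G` if there exists a subgroup
`K ≤ G` such that the natural map `H ∗ K → G` induced by the inclusions is an
isomorphism. -/
def IsFreeFactor {G : Type*} [Group G] (H : Subgroup G) : Prop :=
  ∃ K : Subgroup G, Function.Bijective (Monoid.Coprod.lift H.subtype K.subtype)

/-- The set of generators `X ∪ Y ∪ {y} ∪ {t_0, …, t_{n-1}}` of `F_a`. -/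
def truncGenSet (X Y : Type) (n : ℕ) : Set (FreeGroup (ConstrGen X Y)) :=
  FreeGroup.of '' {g : ConstrGen X Y | match g with
    | Sum.inr (Sum.inr (Sum.inr k)) => k < n
    | _ => True}

open Monoid

section FreeFactorAux

/-- In a free group, the closure of a subset of the generators is a free factor. -/
theorem freeGroup_closure_isFreeFactor {α : Type} (p : α → Prop) [DecidablePred p] :
    IsFreeFactor (Subgroup.closure (FreeGroup.of '' {g | p g})) := by
  set H : Subgroup (FreeGroup α) := Subgroup.closure (FreeGroup.of '' {g | p g}) with hH
  set K : Subgroup (FreeGroup α) := Subgroup.closure (FreeGroup.of '' {g | ¬ p g}) with hK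
  refine ⟨K, ?_⟩
  set L := Monoid.Coprod.lift H.subtype K.subtype with hL
  set inv : FreeGroup α →* Coprod ↥H ↥K := FreeGroup.lift (fun g =>
    if h : p g then Coprod.inl (⟨FreeGroup.of g, Subgroup.subset_closure ⟨g, h, rfl⟩⟩ : H)
    else Coprod.inr (⟨FreeGroup.of g, Subgroup.subset_closure ⟨g, h, rfl⟩⟩ : K)) with hinv
  have h1 : L.comp inv = MonoidHom.id _ := by
    apply FreeGroup.ext_hom
    intro g
    simp only [MonoidHom.comp_apply, MonoidHom.id_apply, hinv, FreeGroup.lift_apply_of]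
    split_ifs with h <;> simp [hL]
  have hmemH : ∀ x (hx : x ∈ H), inv x = Coprod.inl ⟨x, hx⟩ := by
    intro x hx
    induction hx using Subgroup.closure_induction with
    | mem x hx =>
        obtain ⟨g, hg, rfl⟩ := hx
        simp only [hinv, FreeGroup.lift_apply_of]
        exact dif_pos hg
    | one => exact (map_one Coprod.inl).symm
    | mul a b ha hb iha ihb =>
        rw [map_mul, iha, ihb, ← map_mul]
        rfl
    | inv a ha iha =>
        rw [map_inv, iha, ← map_inv]
        rfl
  have hmemK : ∀ x (hx : x ∈ K), inv x = Coprod.inr ⟨x, hx⟩ := by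
    intro x hx
    induction hx using Subgroup.closure_induction with
    | mem x hx =>
        obtain ⟨g, hg, rfl⟩ := hx
        simp only [hinv, FreeGroup.lift_apply_of]
        exact dif_neg hg
    | one => exact (map_one Coprod.inr).symm
    | mul a b ha hb iha ihb =>
        rw [map_mul, iha, ihb, ← map_mul]
        rfl
    | inv a ha iha =>
        rw [map_inv, iha, ← map_inv]
        rfl
  have h2 : inv.comp L = MonoidHom.id _ := by
    apply Coprod.hom_ext
    · ext h
      simp only [MonoidHom.comp_apply, MonoidHom.id_apply, hL, Coprod.lift_apply_inl]
      exact hmemH _ h.2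
    · ext k
      simp only [MonoidHom.comp_apply, MonoidHom.id_apply, hL, Coprod.lift_apply_inr]
      exact hmemK _ k.2
  exact Function.bijective_iff_has_inverse.mpr ⟨inv,
    fun x => DFunLike.congr_fun h2 x, fun x => DFunLike.congr_fun h1 x⟩

/-- Free factors are preserved by bijective homomorphisms. -/
theorem isFreeFactor_map {G G' : Type*} [Group G] [Group G'] {f : G →* G'}
    (hf : Function.Bijective f) {K : Subgroup G} (h : IsFreeFactor K) :
    IsFreeFactor (K.map f) := by
  obtain ⟨Kc, hbij⟩ := h
  refine ⟨Kc.map f, ?_⟩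
  set eK := Subgroup.equivMapOfInjective K f hf.injective with heK
  set eKc := Subgroup.equivMapOfInjective Kc f hf.injective with heKc
  set m : Coprod ↥K ↥Kc →* Coprod ↥(K.map f) ↥(Kc.map f) :=
    Coprod.map eK.toMonoidHom eKc.toMonoidHom with hm
  set m' : Coprod ↥(K.map f) ↥(Kc.map f) →* Coprod ↥K ↥Kc :=
    Coprod.map eK.symm.toMonoidHom eKc.symm.toMonoidHom with hm'
  have hmbij : Function.Bijective m := by
    apply Function.bijective_iff_has_inverse.mpr
    refine ⟨m', fun x => ?_, fun x => ?_⟩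
    · rw [hm, hm', Coprod.map_map]
      have : (eK.symm.toMonoidHom.comp eK.toMonoidHom) = MonoidHom.id _ := by
        ext a; simp
      have h2 : (eKc.symm.toMonoidHom.comp eKc.toMonoidHom) = MonoidHom.id _ := by
        ext a; simp
      rw [this, h2, Coprod.map_id_id]; rfl
    · rw [hm, hm', Coprod.map_map]
      have : (eK.toMonoidHom.comp eK.symm.toMonoidHom) = MonoidHom.id _ := by
        ext a; simp
      have h2 : (eKc.toMonoidHom.comp eKc.symm.toMonoidHom) = MonoidHom.id _ := by
        ext a; simp
      rw [this, h2, Coprod.map_id_id]; rfl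
  have key : (Coprod.lift (K.map f).subtype (Kc.map f).subtype).comp m =
      f.comp (Coprod.lift K.subtype Kc.subtype) := by
    apply Coprod.hom_ext <;> ext a <;>
      simp [hm, heK, heKc, Subgroup.coe_equivMapOfInjective_apply]
  have hcomp : Function.Bijective
      (⇑(Coprod.lift (K.map f).subtype (Kc.map f).subtype) ∘ ⇑m) := by
    have : ⇑(Coprod.lift (K.map f).subtype (Kc.map f).subtype) ∘ ⇑m =
        ⇑f ∘ ⇑(Coprod.lift K.subtype Kc.subtype) := by
      rw [← MonoidHom.coe_comp, key, MonoidHom.coe_comp]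
    rw [this]
    exact hf.comp hbij
  exact (Function.Bijective.of_comp_iff _ hmbij).mp hcomp

end FreeFactorAux

section Psi

open FreeGroup in
/-- Value of the automorphism `ψ` on generators. -/
def psiFun (X Y : Type) (n : ℕ) : ConstrGen X Y → FreeGroup (ConstrGen X Y)
  | Sum.inl x => of (Sum.inl x)
  | Sum.inr (Sum.inl w) => of (Sum.inr (Sum.inl w))
  | Sum.inr (Sum.inr (Sum.inl _)) => of (yGen X Y)
  | Sum.inr (Sum.inr (Sum.inr k)) =>
      if k < n then
        of (yGen X Y) * (of (nGen X Y (k + 1)))⁻¹ * of (nGen X Y k) * of (nGen X Y (k + 1))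
      else of (nGen X Y k)

def psiHom (X Y : Type) (n : ℕ) : FreeGroup (ConstrGen X Y) →* FreeGroup (ConstrGen X Y) :=
  FreeGroup.lift (psiFun X Y n)

/-- Value of the inverse automorphism `ξ` on `z_k`, defined by downward recursion. -/
def uAux (X Y : Type) (n k : ℕ) : FreeGroup (ConstrGen X Y) :=
  if _h : k < n then
    uAux X Y n (k + 1) * (FreeGroup.of (yGen X Y))⁻¹ * FreeGroup.of (nGen X Y k) *
      (uAux X Y n (k + 1))⁻¹
  else FreeGroup.of (nGen X Y k)
  termination_by n - k
  decreasing_by omega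

def xiFun (X Y : Type) (n : ℕ) : ConstrGen X Y → FreeGroup (ConstrGen X Y)
  | Sum.inl x => FreeGroup.of (Sum.inl x)
  | Sum.inr (Sum.inl w) => FreeGroup.of (Sum.inr (Sum.inl w))
  | Sum.inr (Sum.inr (Sum.inl _)) => FreeGroup.of (yGen X Y)
  | Sum.inr (Sum.inr (Sum.inr k)) => uAux X Y n k

def xiHom (X Y : Type) (n : ℕ) : FreeGroup (ConstrGen X Y) →* FreeGroup (ConstrGen X Y) :=
  FreeGroup.lift (xiFun X Y n)

theorem psiHom_yGen (X Y : Type) (n : ℕ) :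
    psiHom X Y n (FreeGroup.of (yGen X Y)) = FreeGroup.of (yGen X Y) := by
  simp [psiHom, FreeGroup.lift_apply_of, yGen, psiFun]

theorem psiHom_uAux (X Y : Type) (n k : ℕ) :
    psiHom X Y n (uAux X Y n k) = FreeGroup.of (nGen X Y k) := by
  rw [uAux]
  split_ifs with h
  · rw [map_mul, map_mul, map_mul, map_inv, map_inv, psiHom_uAux X Y n (k + 1), psiHom_yGen]
    have hz : psiHom X Y n (FreeGroup.of (nGen X Y k)) =
        FreeGroup.of (yGen X Y) * (FreeGroup.of (nGen X Y (k + 1)))⁻¹ *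
          FreeGroup.of (nGen X Y k) * FreeGroup.of (nGen X Y (k + 1)) := by
      simp only [psiHom, FreeGroup.lift_apply_of, nGen, psiFun]
      rw [if_pos h]
    rw [hz]
    group
  · simp only [psiHom, FreeGroup.lift_apply_of, nGen, psiFun]
    rw [if_neg h]
  termination_by n - k
  decreasing_by omega

theorem xi_comp_psi (X Y : Type) (n : ℕ) :
    (xiHom X Y n).comp (psiHom X Y n) = MonoidHom.id _ := by
  apply FreeGroup.ext_hom
  intro g
  simp only [MonoidHom.comp_apply, MonoidHom.id_apply, psiHom, FreeGroup.lift_apply_of]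
  match g with
  | Sum.inl x => simp [psiFun, xiHom, xiFun, FreeGroup.lift_apply_of]
  | Sum.inr (Sum.inl w) => simp [psiFun, xiHom, xiFun, FreeGroup.lift_apply_of]
  | Sum.inr (Sum.inr (Sum.inl u)) => simp [psiFun, xiHom, xiFun, FreeGroup.lift_apply_of, yGen]
  | Sum.inr (Sum.inr (Sum.inr k)) =>
    show xiHom X Y n (psiFun X Y n (nGen X Y k)) = FreeGroup.of (nGen X Y k)
    simp only [psiFun, nGen]
    split_ifs with h
    · have hy : xiHom X Y n (FreeGroup.of (yGen X Y)) = FreeGroup.of (yGen X Y) := by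
        simp [xiHom, FreeGroup.lift_apply_of, yGen, xiFun]
      have hz : ∀ m, xiHom X Y n (FreeGroup.of (nGen X Y m)) = uAux X Y n m := by
        intro m; simp [xiHom, FreeGroup.lift_apply_of, nGen, xiFun]
      rw [map_mul, map_mul, map_mul, map_inv]
      rw [show (Sum.inr (Sum.inr (Sum.inr (k+1))) : ConstrGen X Y) = nGen X Y (k+1) from rfl,
        show (Sum.inr (Sum.inr (Sum.inr k)) : ConstrGen X Y) = nGen X Y k from rfl]
      rw [hy, hz, hz]
      rw [show uAux X Y n k = uAux X Y n (k + 1) * (FreeGroup.of (yGen X Y))⁻¹ *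
          FreeGroup.of (nGen X Y k) * (uAux X Y n (k + 1))⁻¹ by rw [uAux]; exact dif_pos h]
      show _ = FreeGroup.of (nGen X Y k)
      group
    · show xiHom X Y n (FreeGroup.of (nGen X Y k)) = FreeGroup.of (nGen X Y k)
      simp only [xiHom, FreeGroup.lift_apply_of, nGen, xiFun]
      rw [uAux]
      exact dif_neg h

theorem psi_comp_xi (X Y : Type) (n : ℕ) :
    (psiHom X Y n).comp (xiHom X Y n) = MonoidHom.id _ := by
  apply FreeGroup.ext_hom
  intro g
  simp only [MonoidHom.comp_apply, MonoidHom.id_apply, xiHom, FreeGroup.lift_apply_of]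
  match g with
  | Sum.inl x => simp [xiFun, psiHom, psiFun, FreeGroup.lift_apply_of]
  | Sum.inr (Sum.inl w) => simp [xiFun, psiHom, psiFun, FreeGroup.lift_apply_of]
  | Sum.inr (Sum.inr (Sum.inl u)) => simp [xiFun, psiHom, psiFun, FreeGroup.lift_apply_of, yGen]
  | Sum.inr (Sum.inr (Sum.inr k)) =>
    show psiHom X Y n (uAux X Y n k) = FreeGroup.of (nGen X Y k)
    exact psiHom_uAux X Y n k

theorem psiHom_bijective (X Y : Type) (n : ℕ) : Function.Bijective (psiHom X Y n) :=
  Function.bijective_iff_has_inverse.mpr ⟨xiHom X Y n,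
    fun x => DFunLike.congr_fun (xi_comp_psi X Y n) x,
    fun x => DFunLike.congr_fun (psi_comp_xi X Y n) x⟩

end Psi

/-- For every `n ∈ ℕ`, the subgroup `φ(⟨X ∪ Y ∪ {y} ∪ {t_0, …, t_{n−1}}⟩)` is a free
factor of `F_b`. -/
theorem map_constrPhi_truncated_isFreeFactor (X Y : Type) (n : ℕ) :
    IsFreeFactor (Subgroup.map (constrPhi X Y) (Subgroup.closure (truncGenSet X Y n))) := by
  classical
  have hset : ⇑(constrPhi X Y) '' truncGenSet X Y n = ⇑(psiHom X Y n) '' truncGenSet X Y n := by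
    apply Set.image_congr
    rintro x ⟨g, hg, rfl⟩
    simp only [constrPhi, psiHom, FreeGroup.lift_apply_of]
    match g, hg with
    | Sum.inl x, _ => rfl
    | Sum.inr (Sum.inl w), _ => rfl
    | Sum.inr (Sum.inr (Sum.inl u)), _ => rfl
    | Sum.inr (Sum.inr (Sum.inr k)), hg =>
      show _ = psiFun X Y n (nGen X Y k)
      simp only [psiFun, nGen]
      rw [if_pos (show k < n from hg)]
  have hmap : Subgroup.map (constrPhi X Y) (Subgroup.closure (truncGenSet X Y n)) =
      Subgroup.map (psiHom X Y n) (Subgroup.closure (truncGenSet X Y n)) := by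
    rw [MonoidHom.map_closure, MonoidHom.map_closure, hset]
  rw [hmap]
  exact isFreeFactor_map (psiHom_bijective X Y n)
    (freeGroup_closure_isFreeFactor (fun g : ConstrGen X Y => match g with
      | Sum.inr (Sum.inr (Sum.inr k)) => k < n
      | _ => True))
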